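/- For all r, s ∈ ℤ, every β ∈ ℤ, and all indices 1 ≤ i, j ≤ n, the trace cocycle satisfies c_Lie(L_r^{(β)}, E_{ij}^s) = δ_{r,−s}·δ_{ij}·(r(r+1)/2)·(1−2β), where L_r^{(β)} is the endomorphism of V given by v ↦ z^{r+1} • v′ + β(r+1)·z^r • v, and E_{ij}^s is the endomorphism whose m-th component of E_{ij}^s(v) is δ_{mi}·z^s·v_j. -/

import Mathlib

noncomputable section

abbrev K : Type := LaurentSeries ℂ

abbrev V (n : ℕ) : Type := Fin n → K

/-- The formal derivative of a Laurent series. -/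
def fd (f : K) : K :=
  ⟨fun k => ((k + 1 : ℤ) : ℂ) * f.coeff (k + 1), by
    apply Set.IsPWO.mono (f.isPWO_support.image_of_monotone
      (f := fun x => x - 1) (fun _ _ h => sub_le_sub_right h 1))
    intro k hk
    have : f.coeff (k + 1) ≠ 0 := by
      intro h
      simp [Function.mem_support, h] at hk
    exact ⟨k + 1, this, by ring⟩⟩

/-- Truncation of a Laurent series to its coefficients in negative degrees: the
projection onto `K₋` along `K₊`. -/
def tneg (f : K) : K :=
  ⟨fun k => if k < 0 then f.coeff k else 0, by
    refine f.isPWO_support.mono (fun k hk => ?_)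
    simp only [Function.mem_support] at hk ⊢
    by_cases h : k < 0
    · simpa [h] using hk
    · simp [h] at hk⟩

/-- Truncation of a Laurent series to its coefficients in non-negative degrees: the
projection onto `K₊` along `K₋`. -/
def tpos (f : K) : K :=
  ⟨fun k => if 0 ≤ k then f.coeff k else 0, by
    refine f.isPWO_support.mono (fun k hk => ?_)
    simp only [Function.mem_support] at hk ⊢
    by_cases h : (0:ℤ) ≤ k
    · simpa [h] using hk
    · simp [h] at hk⟩

/-- Componentwise projection of `V` onto `V₋` along `V₊`. -/
def projM {n : ℕ} (v : V n) : V n := fun i => tneg (v i)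

/-- Componentwise projection of `V` onto `V₊` along `V₋`. -/
def projP {n : ℕ} (v : V n) : V n := fun i => tpos (v i)

/-- The basis vector `z^m · e_i` of `V`. -/
def bas (n : ℕ) (m : ℤ) (i : Fin n) : V n :=
  fun j => if j = i then HahnSeries.single m 1 else 0

/-- `T₁^{+−} ∘ T₂^{−+} − T₂^{+−} ∘ T₁^{−+}` as a map `V₋ → V₋` (evaluated through the
projections onto `V₋` and `V₊`). -/
def commPM {n : ℕ} (T₁ T₂ : V n → V n) (v : V n) : V n :=
  projM (T₁ (projP (T₂ (projM v)))) - projM (T₂ (projP (T₁ (projM v))))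

/-- The trace cocycle `c_Lie(T₁, T₂) = Tr(T₁^{+−} T₂^{−+} − T₂^{+−} T₁^{−+})`, computed
as the (finitely supported) sum of the diagonal coefficients in the basis
`{z^m e_i : m < 0, i}` of `V₋`. -/
def cLie (n : ℕ) (T₁ T₂ : V n → V n) : ℂ :=
  ∑ᶠ (m : ℤ) (_ : m < 0) (i : Fin n), ((commPM T₁ T₂ (bas n m i)) i).coeff m

/-- The `β`-twisted Virasoro operator `L_r^{(β)} : v ↦ z^{r+1} • v′ + β(r+1) z^r • v`,
acting componentwise on `V`. -/
def Lb (n : ℕ) (β r : ℤ) : V n → V n :=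
  fun v i => HahnSeries.single (r + 1) 1 * fd (v i)
    + (β * (r + 1)) • (HahnSeries.single r 1 * v i)

/-- The current-algebra generator `E_{ij}^s`, whose `m`-th component of `E_{ij}^s v` is
`δ_{mi} · z^s · v_j`. -/
def Eb (n : ℕ) (i j : Fin n) (s : ℤ) : V n → V n :=
  fun v m => if m = i then HahnSeries.single s 1 * v j else 0

lemma smc (a b : ℤ) (x : K) : ((HahnSeries.single a (1:ℂ)) * x).coeff b = x.coeff (b - a) := by
  have h : b = (b - a) + a := by ring
  rw [h, HahnSeries.coeff_single_mul_add, one_mul]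
  ring_nf

lemma fd_coeff (f : K) (k : ℤ) : (fd f).coeff k = ((k+1 : ℤ):ℂ) * f.coeff (k+1) := rfl
lemma tneg_coeff (f : K) (k : ℤ) : (tneg f).coeff k = if k < 0 then f.coeff k else 0 := rfl
lemma tpos_coeff (f : K) (k : ℤ) : (tpos f).coeff k = if 0 ≤ k then f.coeff k else 0 := rfl
lemma coeff_if (P : Prop) [Decidable P] (a b : K) (u : ℤ) :
    (if P then a else b).coeff u = if P then a.coeff u else b.coeff u := by
  split <;> rfl

lemma zsmul_coeff (c : ℤ) (x : K) (u : ℤ) : (c • x).coeff u = (c:ℂ) * x.coeff u := by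
  rw [← Int.cast_smul_eq_zsmul ℂ, HahnSeries.coeff_smul, smul_eq_mul]

set_option maxHeartbeats 1000000 in
lemma key (n : ℕ) (β r s : ℤ) (i j k : Fin n) (m : ℤ) (hm : m < 0) :
    ((commPM (Lb n β r) (Eb n i j s) (bas n m k)) k).coeff m =
      (if r = -s ∧ k = i ∧ j = k ∧ r ≤ m then ((m:ℂ) - r) + β*(r+1) else 0)
    - (if r = -s ∧ k = i ∧ j = k ∧ -r ≤ m then (m:ℂ) + β*(r+1) else 0) := by
  simp only [commPM, projM, projP, Lb, Eb, bas, Pi.sub_apply, HahnSeries.coeff_sub,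
    HahnSeries.coeff_add, zsmul_coeff, tneg_coeff, tpos_coeff, fd_coeff, smc, coeff_if,
    HahnSeries.coeff_zero, HahnSeries.coeff_single,
    mul_ite, mul_zero, ite_mul, zero_mul, hm, if_true]
  by_cases hrs : r = -s <;> by_cases hki : k = i <;> by_cases hjk : j = k <;>
    simp only [hrs, hki, hjk, true_and, and_true, false_and, and_false, if_true, if_false,
      eq_self_iff_true, not_true, not_false_iff, if_neg, neg_neg] <;>
    split_ifs <;> first | (exfalso; omega) | (push_cast; ring)
lemma gsum (N : ℕ) (c : ℂ) :
    ∑ m ∈ Finset.Icc (-(N:ℤ)) (-1), ((m:ℂ) + c) = (N:ℂ)*(-(N:ℂ)-1)/2 + N*c := by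
  induction N with
  | zero => rw [Finset.Icc_eq_empty (by omega)]; simp
  | succ p ih =>
      have hins : Finset.Icc (-((p+1:ℕ):ℤ)) (-1) =
          insert (-((p+1:ℕ):ℤ)) (Finset.Icc (-(p:ℤ)) (-1)) := by
        ext x; simp only [Finset.mem_Icc, Finset.mem_insert]; omega
      rw [hins, Finset.sum_insert (by simp only [Finset.mem_Icc]; omega), ih]
      push_cast
      ring


/-- The mixed value of the trace cocycle:
`c_Lie(L_r^{(β)}, E_{ij}^s) = δ_{r,−s} · δ_{ij} · (r(r+1)/2) · (1−2β)`. -/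
theorem cLie_mixed (n : ℕ) (hn : 1 ≤ n) (r s β : ℤ) (i j : Fin n) :
    cLie n (Lb n β r) (Eb n i j s) =
      if r = -s ∧ i = j then ((r : ℂ) * (r + 1) / 2) * (1 - 2 * (β : ℂ)) else 0 := by
  classical
  set D : ℤ → ℂ := fun m =>
      (if r = -s ∧ j = i ∧ r ≤ m then ((m:ℂ) - r) + β*(r+1) else 0)
    - (if r = -s ∧ j = i ∧ -r ≤ m then (m:ℂ) + β*(r+1) else 0) with hD
  set G : ℤ → ℂ := fun m => if m < 0 then D m else 0 with hG
  have hstep : cLie n (Lb n β r) (Eb n i j s) = ∑ᶠ m : ℤ, G m := by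
    unfold cLie
    refine finsum_congr fun m => ?_
    by_cases hm : m < 0
    · rw [finsum_eq_if, if_pos hm, finsum_eq_sum_of_fintype, hG]
      simp only [if_pos hm]
      have : ∀ k : Fin n,
          ((commPM (Lb n β r) (Eb n i j s) (bas n m k)) k).coeff m
            = if k = i then D m else 0 := by
        intro k
        rw [key n β r s i j k m hm]
        by_cases hk : k = i
        · subst hk; simp [hD]
        · simp [hk]
      rw [Finset.sum_congr rfl (fun k _ => this k)]
      simp
    · rw [finsum_eq_if, if_neg hm, hG]
      simp [hm]
  rw [hstep]
  have hsupp0 : ∀ m : ℤ, m < -(r.natAbs : ℤ) → G m = 0 := by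
    intro m h
    have h1 : ¬ (r ≤ m) := by omega
    have h2 : ¬ (-r ≤ m) := by omega
    simp [hG, hD, h1, h2]
  have hsub : Function.support G ⊆ ↑(Finset.Icc (-(r.natAbs:ℤ)) (-1)) := by
    intro m hm
    simp only [Function.mem_support] at hm
    simp only [Finset.coe_Icc, Set.mem_Icc]
    constructor
    · by_contra h; exact hm (hsupp0 m (by omega))
    · by_contra h; exact hm (by simp [hG, show ¬ m < 0 by omega])
  rw [finsum_eq_sum_of_support_subset G hsub]
  by_cases hc : r = -s ∧ i = j
  · obtain ⟨hrs, hij⟩ := hc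
    rw [if_pos ⟨hrs, hij⟩]
    rcases lt_trichotomy r 0 with hr | hr | hr
    · -- r < 0
      have hN : (r.natAbs : ℤ) = -r := by omega
      have hcongr : ∀ m ∈ Finset.Icc (-(r.natAbs:ℤ)) (-1),
          G m = (m:ℂ) + (-(r:ℂ) + β*(r+1)) := by
        intro m hmm
        simp only [Finset.mem_Icc] at hmm
        have h1 : m < 0 := by omega
        have h2 : r ≤ m := by omega
        have h3 : ¬ (-r ≤ m) := by omega
        simp only [hG, hD]
        rw [if_pos h1, if_pos (show r = -s ∧ j = i ∧ r ≤ m from ⟨hrs, hij.symm, h2⟩),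
          if_neg (show ¬(r = -s ∧ j = i ∧ -r ≤ m) from fun hh => h3 hh.2.2)]
        ring
      rw [Finset.sum_congr rfl hcongr, gsum]
      have hNC : ((r.natAbs : ℕ) : ℂ) = -(r:ℂ) := by
        rw [← Int.cast_natCast (R := ℂ), hN, Int.cast_neg]
      rw [hNC]
      ring
    · subst hr
      rw [Finset.Icc_eq_empty (by norm_num), Finset.sum_empty]
      norm_num
    · -- r > 0
      have hN : (r.natAbs : ℤ) = r := by omega
      have hcongr : ∀ m ∈ Finset.Icc (-(r.natAbs:ℤ)) (-1),
          G m = -((m:ℂ) + (β*(r+1) : ℂ)) := by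
        intro m hmm
        simp only [Finset.mem_Icc] at hmm
        have h1 : m < 0 := by omega
        have h2 : ¬ (r ≤ m) := by omega
        have h3 : -r ≤ m := by omega
        simp only [hG, hD]
        rw [if_pos h1, if_neg (show ¬(r = -s ∧ j = i ∧ r ≤ m) from fun hh => h2 hh.2.2),
          if_pos (show r = -s ∧ j = i ∧ -r ≤ m from ⟨hrs, hij.symm, h3⟩)]
        ring
      rw [Finset.sum_congr rfl hcongr, Finset.sum_neg_distrib, gsum]
      have hNC : ((r.natAbs : ℕ) : ℂ) = (r:ℂ) := by
        rw [← Int.cast_natCast (R := ℂ), hN]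
      rw [hNC]
      ring
  · rw [if_neg hc]
    refine Finset.sum_eq_zero fun m _ => ?_
    by_cases hm : m < 0
    · have hji : ¬ (r = -s ∧ j = i) := fun hh => hc ⟨hh.1, hh.2.symm⟩
      have hf1 : ¬ (r = -s ∧ j = i ∧ r ≤ m) := fun hh => hji ⟨hh.1, hh.2.1⟩
      have hf2 : ¬ (r = -s ∧ j = i ∧ -r ≤ m) := fun hh => hji ⟨hh.1, hh.2.1⟩
      simp [hG, hD, hf1, hf2]
    · simp [hG, hm]


end
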